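/- Let (R, m) be a Noetherian local ring and let I be an m-primary ideal such that R/I is Gorenstein. Then either (a) there exists a minimal generating set x_1, …, x_n of m and an integer s ≥ 1 such that I = (x_1, …, x_{n-1}, x_n^s), or (b) L² = I·L, where L = I : m. -/

import Mathlib

universe u

/-- An ideal is irreducible if it is proper and is not the intersection of two
ideals properly containing it. -/
def Ideal.IsIrreducibleIdeal {R : Type*} [CommRing R] (I : Ideal R) : Prop :=
  I ≠ ⊤ ∧ ∀ J K : Ideal R, I = J ⊓ K → I = J ∨ I = K

open IsLocalRing Submodule

section GotoAux

set_option linter.unusedSectionVars false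
set_option linter.unusedVariables false
set_option linter.unnecessarySimpa false
set_option maxHeartbeats 1600000

variable {R : Type u} [CommRing R] [IsLocalRing R] [IsNoetherianRing R]

private lemma gotoAux_unit_of_not_mem_max {r : R} (h : r ∉ maximalIdeal R) : IsUnit r := by
  by_contra hr; exact h (IsLocalRing.mem_maximalIdeal r |>.mpr hr)

private lemma gotoAux_nak (P Q : Ideal R) (h : P ≤ Q ⊔ (maximalIdeal R) * P) : P ≤ Q := by
  have h' : P ≤ Q ⊔ (maximalIdeal R) • P := by
    rw [Ideal.smul_eq_mul]; exact h
  have h2 := Submodule.smul_le_of_le_smul_of_le_jacobson_bot (IsNoetherian.noetherian P)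
    (IsLocalRing.maximalIdeal_le_jacobson ⊥) h'
  exact le_trans h' (sup_le le_rfl h2)

private lemma gotoAux_pow_sup_span_le (K : Ideal R) (ξ : R) (t : ℕ) :
    (K ⊔ Ideal.span {ξ}) ^ t ≤ K ⊔ Ideal.span {ξ ^ t} := by
  induction t with
  | zero => simp [pow_zero, Ideal.span_singleton_one]
  | succ t ih =>
      rw [pow_succ]
      calc (K ⊔ Ideal.span {ξ}) ^ t * (K ⊔ Ideal.span {ξ})
          ≤ (K ⊔ Ideal.span {ξ ^ t}) * (K ⊔ Ideal.span {ξ}) := Ideal.mul_mono ih le_rfl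
        _ ≤ K ⊔ Ideal.span {ξ ^ (t + 1)} := by
            rw [Ideal.mul_sup, Ideal.sup_mul, Ideal.sup_mul]
            refine sup_le (sup_le ?_ ?_) (sup_le ?_ ?_)
            · exact le_sup_of_le_left Ideal.mul_le_right
            · exact le_sup_of_le_left Ideal.mul_le_right
            · exact le_sup_of_le_left Ideal.mul_le_left
            · rw [Ideal.span_singleton_mul_span_singleton, ← pow_succ]
              exact le_sup_right

private lemma gotoAux_greedy [DecidableEq R] (F : Ideal R) (s : Finset R) :
    ∃ t : Finset R, (t : Set R) ⊆ (s : Set R) ∧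
      F ⊔ Ideal.span (t : Set R) = F ⊔ Ideal.span (s : Set R) ∧
      ∀ a ∈ t, a ∉ F ⊔ Ideal.span ((t.erase a : Finset R) : Set R) := by
  induction s using Finset.strongInduction with
  | _ s ih =>
    by_cases h : ∃ a ∈ s, a ∈ F ⊔ Ideal.span ((s.erase a : Finset R) : Set R)
    · obtain ⟨a, ha, haspan⟩ := h
      obtain ⟨t, hts, hspan, hmin⟩ := ih (s.erase a) (Finset.erase_ssubset ha)
      refine ⟨t, hts.trans (Finset.erase_subset _ _), ?_, hmin⟩
      rw [hspan]
      apply le_antisymm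
      · refine sup_le le_sup_left (Ideal.span_le.mpr ?_)
        intro b hb
        exact Submodule.mem_sup_right (Ideal.subset_span (Finset.erase_subset _ _ hb))
      · refine sup_le le_sup_left (Ideal.span_le.mpr ?_)
        intro b hb
        by_cases hba : b = a
        · subst hba; exact haspan
        · exact Submodule.mem_sup_right <| Ideal.subset_span
            (Finset.mem_coe.mpr (Finset.mem_erase.mpr ⟨hba, hb⟩))
    · push_neg at h
      exact ⟨s, le_rfl, rfl, h⟩


private lemma gotoAux_I_le_colon (I : Ideal R) (P : Ideal R) : I ≤ Submodule.colon I P := by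
  intro i hi
  rw [Submodule.mem_colon]
  intro p _
  rw [smul_eq_mul]
  exact Ideal.mul_mem_right p I hi

private lemma gotoAux_colon_top (I : Ideal R) : Submodule.colon I (⊤ : Ideal R) = I := by
  apply le_antisymm
  · intro r hr
    have := Submodule.mem_colon.mp hr 1 trivial
    simpa using this
  · exact gotoAux_I_le_colon I ⊤

private lemma gotoAux_colon_self (I : Ideal R) : Submodule.colon I I = ⊤ := by
  rw [eq_top_iff]
  intro r _
  rw [Submodule.mem_colon]
  intro p hp
  rw [smul_eq_mul]
  exact Ideal.mul_mem_left I r hp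

private lemma gotoAux_colon_anti (I : Ideal R) {P Q : Ideal R} (h : P ≤ Q) :
    Submodule.colon I Q ≤ Submodule.colon I P := by
  intro r hr
  rw [Submodule.mem_colon] at hr ⊢
  exact fun p hp => hr p (h hp)

private lemma gotoAux_le_colon_colon (I J : Ideal R) : J ≤ Submodule.colon I (Submodule.colon I J) := by
  intro j hj
  rw [Submodule.mem_colon]
  intro p hp
  rw [smul_eq_mul, mul_comm, ← smul_eq_mul]
  exact Submodule.mem_colon.mp hp j hj

private lemma gotoAux_colon_sup_left (I P : Ideal R) :
    Submodule.colon I (I ⊔ P : Ideal R) = Submodule.colon I P := by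
  apply le_antisymm
  · exact gotoAux_colon_anti I le_sup_right
  · intro r hr
    rw [Submodule.mem_colon] at hr ⊢
    intro p hp
    obtain ⟨i, hi, q, hq, rfl⟩ := Submodule.mem_sup.mp hp
    rw [smul_add]
    refine add_mem ?_ (hr q hq)
    rw [smul_eq_mul, mul_comm]
    exact Ideal.mul_mem_right r I hi


private lemma gotoAux_socle_dim_one {I : Ideal R} (hirr : I.IsIrreducibleIdeal) {w : R}
    (hw : w ∈ Submodule.colon I (maximalIdeal R)) (hwI : w ∉ I) :
    Submodule.colon I (maximalIdeal R) = I ⊔ Ideal.span {w} := by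
  apply le_antisymm
  · intro w2 hw2
    by_cases hw2I : w2 ∈ I
    · exact Submodule.mem_sup_left hw2I
    · set q1 : Ideal R := I ⊔ Ideal.span {w} with hq1
      set q2 : Ideal R := I ⊔ Ideal.span {w2} with hq2
      have hne : I ≠ q1 ⊓ q2 := by
        intro heq
        rcases hirr.2 _ _ heq with h | h
        · exact hwI (h ▸ Submodule.mem_sup_right (Ideal.subset_span rfl))
        · exact hw2I (h ▸ Submodule.mem_sup_right (Ideal.subset_span rfl))
      have hlt : I < q1 ⊓ q2 :=
        lt_of_le_of_ne (le_inf le_sup_left le_sup_left) hne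
      obtain ⟨h, hmem, hnI⟩ := SetLike.exists_of_lt hlt
      obtain ⟨hq1mem, hq2mem⟩ := Submodule.mem_inf.mp hmem
      obtain ⟨i2, hi2, c2, hc2, hdec⟩ := Submodule.mem_sup.mp hq2mem
      obtain ⟨r2, hr2⟩ := Ideal.mem_span_singleton'.mp hc2
      have hr2unit : IsUnit r2 := by
        apply gotoAux_unit_of_not_mem_max
        intro hr2n
        apply hnI
        have : r2 * w2 ∈ I := by
          have := Submodule.mem_colon.mp hw2 r2 hr2n
          rwa [smul_eq_mul, mul_comm] at this
        rw [← hdec, ← hr2]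
        exact add_mem hi2 this
      obtain ⟨u, hu⟩ := hr2unit
      have hw2eq : w2 = (↑u⁻¹ : R) * (h - i2) := by
        have : h - i2 = r2 * w2 := by rw [← hdec, ← hr2]; ring
        rw [this, ← hu, ← mul_assoc]
        simp
      rw [hw2eq]
      have hsub : h - i2 ∈ q1 := sub_mem hq1mem (Submodule.mem_sup_left hi2)
      exact Ideal.mul_mem_left q1 _ hsub
  · refine sup_le (gotoAux_I_le_colon I _) ?_
    rw [Ideal.span_le, Set.singleton_subset_iff]
    exact hw

private lemma gotoAux_socle_mem_of_gt {I : Ideal R} (hirr : I.IsIrreducibleIdeal) {q : Ideal R}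
    (hIq : I ≤ q) (hqne : q ≠ I) {w : R}
    (hw : w ∈ Submodule.colon I (maximalIdeal R)) (hwI : w ∉ I) : w ∈ q := by
  have hLneI : Submodule.colon I (maximalIdeal R) ≠ I := fun h => hwI (h ▸ hw)
  have hne : I ≠ q ⊓ Submodule.colon I (maximalIdeal R) := by
    intro heq
    rcases hirr.2 _ _ heq with h | h
    · exact hqne h.symm
    · exact hLneI h.symm
  have hlt : I < q ⊓ Submodule.colon I (maximalIdeal R) :=
    lt_of_le_of_ne (le_inf hIq (gotoAux_I_le_colon I _)) hne
  obtain ⟨h, hmem, hnI⟩ := SetLike.exists_of_lt hlt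
  obtain ⟨hqmem, hLmem⟩ := Submodule.mem_inf.mp hmem
  have := gotoAux_socle_dim_one hirr hLmem hnI
  have hwmem : w ∈ I ⊔ Ideal.span {h} := this ▸ hw
  refine (sup_le hIq ?_ : I ⊔ Ideal.span {h} ≤ q) hwmem
  rw [Ideal.span_le, Set.singleton_subset_iff]
  exact hqmem


private lemma gotoAux_exists_cover_step {I C J : Ideal R} (hT : ∃ T, (maximalIdeal R) ^ T ≤ I)
    (hIC : I ≤ C) (hCJ : C < J) :
    ∃ u, u ∈ J ∧ u ∉ C ∧ C ⋖ (C ⊔ Ideal.span {u}) ∧ C ⊔ Ideal.span {u} ≤ J := by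
  classical
  obtain ⟨T, hTle⟩ := hT
  have hex : ∃ t, (maximalIdeal R) ^ t * J ≤ C :=
    ⟨T, le_trans (le_trans Ideal.mul_le_left hTle) hIC⟩
  set t := Nat.find hex with ht
  have htle : (maximalIdeal R) ^ t * J ≤ C := Nat.find_spec hex
  have ht0 : t ≠ 0 := by
    intro h0
    rw [h0, pow_zero, Ideal.one_eq_top, Ideal.top_mul] at htle
    exact absurd htle (not_le_of_gt hCJ)
  have hprev : ¬ ((maximalIdeal R) ^ (t - 1) * J ≤ C) := Nat.find_min hex (by omega)
  obtain ⟨w, hwmem, hwC⟩ := SetLike.not_le_iff_exists.mp hprev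
  have hnu : ∀ z ∈ maximalIdeal R, z * w ∈ C := by
    intro z hz
    have h1 : z * w ∈ (maximalIdeal R) * ((maximalIdeal R) ^ (t - 1) * J) :=
      Ideal.mul_mem_mul hz hwmem
    have h2 : (maximalIdeal R) * ((maximalIdeal R) ^ (t - 1) * J) =
        (maximalIdeal R) ^ t * J := by
      rw [← mul_assoc, ← pow_succ']
      congr 2
      omega
    rw [h2] at h1
    exact htle h1
  have hltsup : C < C ⊔ Ideal.span {w} := by
    refine lt_of_le_of_ne le_sup_left (fun h => hwC ?_)
    rw [h]
    exact Submodule.mem_sup_right (Ideal.subset_span rfl)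
  refine ⟨w, Ideal.mul_le_right hwmem, hwC, ⟨hltsup, ?_⟩, sup_le hCJ.le ?_⟩
  · intro P hCP hPle
    obtain ⟨p, hpP, hpC⟩ := SetLike.exists_of_lt hCP
    have hpmem : p ∈ C ⊔ Ideal.span {w} := le_of_lt hPle hpP
    obtain ⟨c, hc, d, hd, hdec⟩ := Submodule.mem_sup.mp hpmem
    obtain ⟨r, hr⟩ := Ideal.mem_span_singleton'.mp hd
    have hrn : r ∉ maximalIdeal R := by
      intro hrn
      exact hpC (by rw [← hdec, ← hr]; exact add_mem hc (hnu r hrn))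
    obtain ⟨u, hu⟩ := gotoAux_unit_of_not_mem_max hrn
    have hwP : w ∈ P := by
      have heq : w = (↑u⁻¹ : R) * (p - c) := by
        have : p - c = r * w := by rw [← hdec, ← hr]; ring
        rw [this, ← hu, ← mul_assoc]
        simp
      rw [heq]
      exact Ideal.mul_mem_left P _ (sub_mem hpP (hCP.le hc))
    refine (not_le_of_gt hPle) (sup_le hCP.le ?_)
    rw [Ideal.span_le, Set.singleton_subset_iff]
    exact hwP
  · rw [Ideal.span_le, Set.singleton_subset_iff]
    exact Ideal.mul_le_right hwmem

private lemma gotoAux_exists_series {I : Ideal R} (hT : ∃ T, (maximalIdeal R) ^ T ≤ I)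
    (C : Ideal R) (hIC : I ≤ C) (J : Ideal R) (hCJ : C ≤ J) :
    ∃ s : CompositionSeries (Submodule R R), s.head = C ∧ s.last = J := by
  revert hIC hCJ
  refine IsNoetherian.induction
    (P := fun C => I ≤ C → C ≤ J → ∃ s : CompositionSeries (Submodule R R),
      s.head = C ∧ s.last = J) ?_ C
  intro C ih hIC hCJ
  rcases eq_or_lt_of_le hCJ with rfl | hlt
  · exact ⟨RelSeries.singleton _ C, RelSeries.head_singleton C, RelSeries.last_singleton C⟩
  · obtain ⟨u, _, huC, hcov, hsupJ⟩ := gotoAux_exists_cover_step hT hIC hlt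
    obtain ⟨s, hh, hl⟩ := ih (C ⊔ Ideal.span {u}) hcov.lt
      (hIC.trans le_sup_left) hsupJ
    refine ⟨s.cons C (show JordanHolderLattice.IsMaximal C s.head by rw [hh]; exact hcov),
      RelSeries.head_cons _ _ _, ?_⟩
    rw [RelSeries.last_cons]
    exact hl


private lemma gotoAux_colon_step {I : Ideal R} (hirr : I.IsIrreducibleIdeal) {C D : Ideal R}
    (hIC : I ≤ C) (hcov : C ⋖ D) :
    Submodule.colon I D ≤ Submodule.colon I C ∧
      (Submodule.colon I D = Submodule.colon I C ∨
        Submodule.colon I D ⋖ Submodule.colon I C) := by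
  obtain ⟨u, huD, huC⟩ := SetLike.exists_of_lt hcov.lt
  have h1 : C < C ⊔ Ideal.span {u} := by
    refine lt_of_le_of_ne le_sup_left (fun h => huC ?_)
    rw [h]; exact Submodule.mem_sup_right (Ideal.subset_span rfl)
  have h2 : C ⊔ Ideal.span {u} ≤ D := by
    refine sup_le hcov.lt.le ?_
    rw [Ideal.span_le, Set.singleton_subset_iff]; exact huD
  have hD : C ⊔ Ideal.span {u} = D := (h2.lt_or_eq).resolve_left (hcov.2 h1)
  -- multiples of u by the maximal ideal fall into C
  have hnu : ∀ z ∈ maximalIdeal R, z * u ∈ C := by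
    have hE2 : C ⊔ Ideal.span {u} * maximalIdeal R ≤ D := by
      refine sup_le hcov.lt.le (le_trans Ideal.mul_le_left ?_)
      rw [Ideal.span_le, Set.singleton_subset_iff]; exact huD
    rcases (le_sup_left : C ≤ C ⊔ Ideal.span {u} * maximalIdeal R).lt_or_eq with hlt | heq
    · exfalso
      have hED : C ⊔ Ideal.span {u} * maximalIdeal R = D := (hE2.lt_or_eq).resolve_left (hcov.2 hlt)
      have humem : u ∈ C ⊔ Ideal.span {u} * maximalIdeal R := by rw [hED]; exact huD
      obtain ⟨c, hc, g, hg, hdec⟩ := Submodule.mem_sup.mp humem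
      obtain ⟨z, hz, hzu⟩ := Ideal.mem_span_singleton_mul.mp hg
      have hunit : IsUnit (1 - z) := by
        apply gotoAux_unit_of_not_mem_max
        intro hmem
        have h1m : (1 : R) ∈ maximalIdeal R := by
          have := add_mem hmem hz
          simpa using this
        exact (IsLocalRing.mem_maximalIdeal 1 |>.mp h1m) isUnit_one
      obtain ⟨v, hv⟩ := hunit
      apply huC
      have heq2 : u * (1 - z) = c := by
        linear_combination -hdec - hzu
      have : u = (↑v⁻¹ : R) * c := by
        rw [← heq2, ← hv, mul_comm u]
        rw [← mul_assoc]
        simp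
      rw [this]
      exact Ideal.mul_mem_left C _ hc
    · intro z hz
      have : u * z ∈ Ideal.span {u} * maximalIdeal R :=
        Ideal.mul_mem_mul (Ideal.subset_span rfl) hz
      have hmem : u * z ∈ C ⊔ Ideal.span {u} * maximalIdeal R := Submodule.mem_sup_right this
      rw [← heq] at hmem
      rwa [mul_comm] at hmem
  have hanti : Submodule.colon I D ≤ Submodule.colon I C := by
    intro r hr
    rw [Submodule.mem_colon] at hr ⊢
    exact fun p hp => hr p (hcov.lt.le hp)
  refine ⟨hanti, ?_⟩
  by_cases heq : Submodule.colon I D = Submodule.colon I C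
  · exact Or.inl heq
  · refine Or.inr ⟨lt_of_le_of_ne hanti heq, ?_⟩
    -- key: for any w ∈ colon C \ colon D, colon C ≤ colon D ⊔ span {w}
    have hmulI : ∀ w' ∈ Submodule.colon I C, w' ∉ Submodule.colon I D → w' * u ∉ I := by
      intro w' hw'C hw'D hw'uI
      apply hw'D
      rw [Submodule.mem_colon]
      intro p hp
      rw [← hD] at hp
      obtain ⟨c, hc, d, hd, hdec⟩ := Submodule.mem_sup.mp hp
      obtain ⟨r, hr⟩ := Ideal.mem_span_singleton'.mp hd
      rw [smul_eq_mul, ← hdec, ← hr, mul_add]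
      refine add_mem ?_ ?_
      · have := Submodule.mem_colon.mp hw'C c hc
        rwa [smul_eq_mul] at this
      · rw [show w' * (r * u) = r * (w' * u) by ring]
        exact Ideal.mul_mem_left I r hw'uI
    have hmulL : ∀ w' ∈ Submodule.colon I C,
        w' * u ∈ Submodule.colon I (maximalIdeal R) := by
      intro w' hw'C
      rw [Submodule.mem_colon]
      intro p hp
      rw [smul_eq_mul, show w' * u * p = w' * (p * u) by ring, ← smul_eq_mul]
      exact Submodule.mem_colon.mp hw'C _ (hnu p hp)
    have hkey : ∀ w ∈ Submodule.colon I C, w ∉ Submodule.colon I D →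
        Submodule.colon I C ≤ Submodule.colon I D ⊔ Ideal.span {w} := by
      intro w hwC hwD w' hw'C
      by_cases hw'D : w' ∈ Submodule.colon I D
      · exact Submodule.mem_sup_left hw'D
      · have hsoc := gotoAux_socle_dim_one hirr (hmulL w hwC) (hmulI w hwC hwD)
        have hw'u : w' * u ∈ I ⊔ Ideal.span {w * u} := hsoc ▸ hmulL w' hw'C
        obtain ⟨i, hi, d, hd, hdec⟩ := Submodule.mem_sup.mp hw'u
        obtain ⟨r, hr⟩ := Ideal.mem_span_singleton'.mp hd
        have hsubu : (w' - r * w) * u ∈ I := by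
          rw [show (w' - r * w) * u = w' * u - r * (w * u) by ring, ← hdec, ← hr]
          simpa using hi
        have hsubD : w' - r * w ∈ Submodule.colon I D := by
          rw [Submodule.mem_colon]
          intro p hp
          rw [← hD] at hp
          obtain ⟨c, hc, d2, hd2, hdec2⟩ := Submodule.mem_sup.mp hp
          obtain ⟨r2, hr2⟩ := Ideal.mem_span_singleton'.mp hd2
          have hsubC : w' - r * w ∈ Submodule.colon I C :=
            sub_mem hw'C (Ideal.mul_mem_left _ r hwC)
          rw [smul_eq_mul, ← hdec2, ← hr2, mul_add]
          refine add_mem ?_ ?_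
          · have := Submodule.mem_colon.mp hsubC c hc
            rwa [smul_eq_mul] at this
          · rw [show (w' - r * w) * (r2 * u) = r2 * ((w' - r * w) * u) by ring]
            exact Ideal.mul_mem_left I r2 hsubu
        have : w' = (w' - r * w) + r * w := by ring
        rw [this]
        exact add_mem (Submodule.mem_sup_left hsubD)
          (Submodule.mem_sup_right (Ideal.mul_mem_left _ r (Ideal.subset_span rfl)))
    intro P h1P h2P
    obtain ⟨w, hwP, hwD⟩ := SetLike.exists_of_lt h1P
    have hwC : w ∈ Submodule.colon I C := h2P.le hwP
    refine not_le_of_gt h2P ((hkey w hwC hwD).trans (sup_le h1P.le ?_))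
    rw [Ideal.span_le, Set.singleton_subset_iff]; exact hwP


private lemma gotoAux_head_eq_last_of_len_zero (s : CompositionSeries (Submodule R R))
    (h : s.length = 0) : s.head = s.last := by
  unfold RelSeries.head RelSeries.last
  congr 1
  ext
  simp [h]

private lemma gotoAux_colon_series {I : Ideal R} (hirr : I.IsIrreducibleIdeal) :
    ∀ N : ℕ, ∀ s : CompositionSeries (Submodule R R), s.length = N → I ≤ s.head →
    ∃ t : CompositionSeries (Submodule R R), t.head = Submodule.colon I s.last ∧
      t.last = Submodule.colon I s.head ∧ t.length ≤ N := by
  intro N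
  induction N with
  | zero =>
    intro s hlen hIh
    refine ⟨RelSeries.singleton _ (Submodule.colon I s.head), ?_, ?_, by simp⟩
    · rw [RelSeries.head_singleton, gotoAux_head_eq_last_of_len_zero s hlen]
    · rw [RelSeries.last_singleton]
  | succ N ih =>
    intro s hlen hIh
    have hpos : 0 < s.length := by omega
    have hlen' : s.eraseLast.length = N := by
      rw [RelSeries.eraseLast_length, hlen]
      omega
    obtain ⟨t', ht'h, ht'l, ht'len⟩ := ih s.eraseLast hlen'
      (by rw [RelSeries.head_eraseLast]; exact hIh)
    have hcov : s.eraseLast.last ⋖ s.last :=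
      CompositionSeries.isMaximal_eraseLast_last hpos
    have hIlast : I ≤ s.eraseLast.last :=
      le_trans (by rw [RelSeries.head_eraseLast]; exact hIh)
        (CompositionSeries.head_le (Fin.last _))
    obtain ⟨hanti, hstep⟩ := gotoAux_colon_step hirr hIlast hcov
    rcases hstep with heq | hcov2
    · refine ⟨t', ?_, ?_, by omega⟩
      · rw [ht'h, heq]
      · rw [ht'l, RelSeries.head_eraseLast]
    · refine ⟨t'.cons (Submodule.colon I s.last)
        (show JordanHolderLattice.IsMaximal (Submodule.colon I s.last) t'.head by
          rw [ht'h]; exact hcov2), RelSeries.head_cons _ _ _, ?_, ?_⟩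
      · rw [RelSeries.last_cons, ht'l, RelSeries.head_eraseLast]
      · rw [RelSeries.cons_length]; omega

private lemma gotoAux_colon_colon {I : Ideal R} (hT : ∃ T, (maximalIdeal R) ^ T ≤ I)
    (hirr : I.IsIrreducibleIdeal) {J : Ideal R} (hIJ : I ≤ J) :
    Submodule.colon I (Submodule.colon I J) = J := by
  obtain ⟨s1, h1h, h1l⟩ := gotoAux_exists_series hT I le_rfl J hIJ
  obtain ⟨s2, h2h, h2l⟩ := gotoAux_exists_series hT J hIJ ⊤ le_top
  obtain ⟨t1, ht1h, ht1l, ht1len⟩ := gotoAux_colon_series hirr s1.length s1 rfl (le_of_eq h1h.symm)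
  obtain ⟨t2, ht2h, ht2l, ht2len⟩ := gotoAux_colon_series hirr s2.length s2 rfl
    (by rw [h2h]; exact hIJ)
  have hconn12 : s1.last = s2.head := by rw [h1l, h2h]
  have hconn : t2.last = t1.head := by rw [ht2l, ht1h, h1l, h2h]
  have e1 := CompositionSeries.jordan_holder (s1.smash s2 hconn12) (t2.smash t1 hconn)
    (by rw [RelSeries.head_smash, RelSeries.head_smash, h1h, ht2h, h2l, gotoAux_colon_top])
    (by rw [RelSeries.last_smash, RelSeries.last_smash, ht1l, h1h, gotoAux_colon_self, h2l])
  have hlen12 := e1.length_eq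
  rw [RelSeries.smash_length, RelSeries.smash_length] at hlen12
  have ht1exact : t1.length = s1.length := by omega
  have ht2exact : t2.length = s2.length := by omega
  -- second round
  obtain ⟨t2', h2'h, h2'l, h2'len⟩ := gotoAux_colon_series hirr t1.length t1 rfl
    (by rw [ht1h]; exact gotoAux_I_le_colon I _)
  -- t2' : head = colon t1.last = colon ⊤ = I ; last = colon t1.head = colon (colon J)
  obtain ⟨s4, h4h, h4l⟩ := gotoAux_exists_series hT J hIJ
    (Submodule.colon I (Submodule.colon I J)) (gotoAux_le_colon_colon I J)
  have hconn4 : s1.last = s4.head := by rw [h1l, h4h]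
  have e3 := CompositionSeries.jordan_holder (s1.smash s4 hconn4) t2'
    (by rw [RelSeries.head_smash, h1h, h2'h, ht1l, h1h, gotoAux_colon_self, gotoAux_colon_top])
    (by rw [RelSeries.last_smash, h4l, h2'l, ht1h, h1l])
  have hlen3 := e3.length_eq
  rw [RelSeries.smash_length] at hlen3
  have h40 : s4.length = 0 := by omega
  have h4eq := gotoAux_head_eq_last_of_len_zero s4 h40
  rw [h4h, h4l] at h4eq
  exact h4eq.symm


private lemma gotoAux_range_snoc {m : ℕ} (x0 : Fin m → R) (a : R) :
    Set.range (Fin.snoc x0 a : Fin (m + 1) → R) = Set.range x0 ∪ {a} := by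
  ext b
  constructor
  · rintro ⟨j, rfl⟩
    rcases eq_or_ne j (Fin.last m) with rfl | hj
    · right; simp
    · obtain ⟨j', rfl⟩ := Fin.exists_castSucc_eq.mpr hj
      left; exact ⟨j', by simp⟩
  · rintro (⟨j, rfl⟩ | rfl)
    · exact ⟨j.castSucc, by simp⟩
    · exact ⟨Fin.last m, by simp⟩

private lemma gotoAux_finset_to_fin (t : Finset R) :
    ∃ x : Fin t.card → R, Function.Injective x ∧ Set.range x = (t : Set R) := by
  refine ⟨fun i => (t.equivFin.symm i : R), fun i j h => ?_, ?_⟩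
  · exact t.equivFin.symm.injective (Subtype.val_injective h)
  · ext a
    constructor
    · rintro ⟨i, rfl⟩; exact (t.equivFin.symm i).2
    · intro ha
      exact ⟨t.equivFin ⟨a, ha⟩, by simp⟩

/-- the gotoAux_climb: `I = K ⊔ span {ξ^s}` -/
private lemma gotoAux_climb {I K : Ideal R} {ξ : R} (hKI : K ≤ I)
    (hn : maximalIdeal R = K ⊔ Ideal.span {ξ})
    (s : ℕ) (hsle : (maximalIdeal R) ^ s ≤ I) (hmin : ∀ t < s, ¬ (maximalIdeal R) ^ t ≤ I) :
    I = K ⊔ Ideal.span {ξ ^ s} := by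
  have hξn : ξ ∈ maximalIdeal R := by
    rw [hn]; exact Submodule.mem_sup_right (Ideal.subset_span rfl)
  have main : ∀ t, t ≤ s → I ≤ K ⊔ (maximalIdeal R) ^ t := by
    intro t
    induction t with
    | zero => intro _; rw [pow_zero, Ideal.one_eq_top]; exact le_trans le_top le_sup_right
    | succ t iht =>
      intro hts
      have ht : t < s := by omega
      intro a ha
      obtain ⟨p, hp, q, hq, hdec⟩ := Submodule.mem_sup.mp (iht (by omega) ha)
      have hq2 : q ∈ K ⊔ Ideal.span {ξ ^ t} := by
        refine gotoAux_pow_sup_span_le K ξ t ?_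
        rw [← hn]; exact hq
      obtain ⟨p', hp', d, hd, hdec2⟩ := Submodule.mem_sup.mp hq2
      obtain ⟨r, hr⟩ := Ideal.mem_span_singleton'.mp hd
      by_cases hrn : r ∈ maximalIdeal R
      · have : r * ξ ^ t ∈ (maximalIdeal R) ^ (t + 1) := by
          rw [pow_succ']
          exact Ideal.mul_mem_mul hrn (Ideal.pow_mem_pow hξn t)
        have : a ∈ K ⊔ (maximalIdeal R) ^ (t + 1) := by
          rw [← hdec, ← hdec2, ← hr, ← add_assoc]
          exact add_mem (Submodule.mem_sup_left (add_mem hp hp')) (Submodule.mem_sup_right this)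
        exact this
      · exfalso
        obtain ⟨v, hv⟩ := gotoAux_unit_of_not_mem_max hrn
        have hξtI : ξ ^ t ∈ I := by
          have heq : ξ ^ t = (↑v⁻¹ : R) * (a - p - p') := by
            have : a - p - p' = r * ξ ^ t := by
              rw [← hdec, ← hdec2, ← hr]; ring
            rw [this, ← hv, ← mul_assoc]
            simp
          rw [heq]
          exact Ideal.mul_mem_left I _ (sub_mem (sub_mem ha (hKI hp)) (hKI hp'))
        refine hmin t ht ?_
        calc (maximalIdeal R) ^ t ≤ K ⊔ Ideal.span {ξ ^ t} := by
              rw [hn]; exact gotoAux_pow_sup_span_le K ξ t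
          _ ≤ I := sup_le hKI (by rwa [Ideal.span_le, Set.singleton_subset_iff])
  apply le_antisymm
  · refine le_trans (main s le_rfl) ?_
    refine sup_le le_sup_left ?_
    rw [hn]
    exact gotoAux_pow_sup_span_le K ξ s
  · refine sup_le hKI ?_
    rw [Ideal.span_le, Set.singleton_subset_iff]
    exact hsle (Ideal.pow_mem_pow hξn s)


private lemma gotoAux_caseA {I : Ideal R} (hIn : I ≤ maximalIdeal R) (hItop : I ≠ ⊤)
    (hT : ∃ T, (maximalIdeal R) ^ T ≤ I)
    (hA : ∃ ξ ∈ maximalIdeal R, maximalIdeal R ≤ I ⊔ (maximalIdeal R) ^ 2 ⊔ Ideal.span {ξ}) :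
    ∃ (n : ℕ) (x : Fin n → R) (s : ℕ), 1 ≤ s ∧
      Ideal.span (Set.range x) = maximalIdeal R ∧
      (∀ i, x i ∉ Ideal.span (x '' {j | j ≠ i})) ∧
      I = Ideal.span (Set.range fun i : Fin n =>
        if (i : ℕ) + 1 = n then x i ^ s else x i) := by
  classical
  by_cases hnI : maximalIdeal R ≤ I
  · -- I = maximal ideal
    have hEq : I = maximalIdeal R := le_antisymm hIn hnI
    obtain ⟨G, hG0⟩ := IsNoetherian.noetherian (maximalIdeal R)
    have hG : Ideal.span (G : Set R) = maximalIdeal R := hG0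
    obtain ⟨t, hsub, hspan, hmin⟩ := gotoAux_greedy (⊥ : Ideal R) G
    rw [bot_sup_eq, bot_sup_eq] at hspan
    have hspanT : Ideal.span (t : Set R) = maximalIdeal R := by rw [hspan, hG]
    by_cases hcard : t.card = 0
    · have ht0 : t = ∅ := Finset.card_eq_zero.mp hcard
      have hbot : maximalIdeal R = ⊥ := by
        rw [← hspanT, ht0]
        simp
      refine ⟨0, Fin.elim0, 1, le_rfl, ?_, fun i => i.elim0, ?_⟩
      · rw [Set.range_eq_empty, Ideal.span_empty, hbot]
      · rw [Set.range_eq_empty, Ideal.span_empty]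
        rw [hEq, hbot]
    · obtain ⟨x, hinj, hrange⟩ := gotoAux_finset_to_fin t
      refine ⟨t.card, x, 1, le_rfl, ?_, ?_, ?_⟩
      · rw [hrange]; exact hspanT
      · intro i hi
        refine hmin (x i) ?_ ?_
        · have : x i ∈ (t : Set R) := hrange ▸ Set.mem_range_self i
          exact this
        · rw [bot_sup_eq]
          refine Ideal.span_mono ?_ hi
          rintro a ⟨j, hj, rfl⟩
          refine Finset.mem_coe.mpr (Finset.mem_erase.mpr ⟨fun h => hj (hinj h), ?_⟩)
          have : x j ∈ (t : Set R) := hrange ▸ Set.mem_range_self j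
          exact this
      · have hfun : (fun i : Fin t.card =>
            if (i : ℕ) + 1 = t.card then x i ^ 1 else x i) = x := by
          funext i
          rw [pow_one, ite_self]
        rw [hfun, hrange, hspanT]
        exact hEq
  · obtain ⟨ξ, hξn, hAle⟩ := hA
    set sI := Nat.find hT with hsIdef
    have hsle : (maximalIdeal R) ^ sI ≤ I := Nat.find_spec hT
    have hminlt : ∀ t < sI, ¬ (maximalIdeal R) ^ t ≤ I := fun t ht => Nat.find_min hT ht
    have hs0 : sI ≠ 0 := by
      intro h0
      rw [h0, pow_zero, Ideal.one_eq_top, top_le_iff] at hsle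
      exact hItop hsle
    have hs1 : sI ≠ 1 := by
      intro h1
      rw [h1, pow_one] at hsle
      exact hnI hsle
    have hξnotI2 : ξ ∉ I ⊔ (maximalIdeal R) ^ 2 := by
      intro hmem
      apply hnI
      have hle2 : maximalIdeal R ≤ I ⊔ (maximalIdeal R) ^ 2 :=
        le_trans hAle (sup_le le_rfl (by
          rw [Ideal.span_le, Set.singleton_subset_iff]; exact hmem))
      refine gotoAux_nak (maximalIdeal R) I ?_
      rwa [← pow_two]
    have hnEq : maximalIdeal R = I ⊔ Ideal.span {ξ} := by
      apply le_antisymm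
      · refine gotoAux_nak (maximalIdeal R) (I ⊔ Ideal.span {ξ}) ?_
        refine le_trans hAle ?_
        refine sup_le (sup_le ?_ ?_) ?_
        · exact le_sup_of_le_left le_sup_left
        · rw [pow_two]; exact le_sup_right
        · exact le_sup_of_le_left le_sup_right
      · exact sup_le hIn (by rw [Ideal.span_le, Set.singleton_subset_iff]; exact hξn)
    obtain ⟨G, hG0⟩ := IsNoetherian.noetherian I
    have hG : Ideal.span (G : Set R) = I := hG0
    obtain ⟨t, hsub, hspan, hmin⟩ := gotoAux_greedy (Ideal.span {ξ}) G
    set K := Ideal.span (t : Set R) with hKdef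
    have hKI : K ≤ I := by
      rw [hKdef, Ideal.span_le]
      intro a ha
      rw [← hG]
      exact Ideal.subset_span (hsub ha)
    have hnK : maximalIdeal R = K ⊔ Ideal.span {ξ} := by
      rw [hnEq, ← hG, sup_comm, ← hspan, sup_comm]
    have hclimb : I = K ⊔ Ideal.span {ξ ^ sI} := gotoAux_climb hKI hnK sI hsle hminlt
    have hξK : ξ ∉ K := by
      intro h
      apply hnI
      have : maximalIdeal R = K := by
        rw [hnK]
        exact sup_eq_left.mpr (by rw [Ideal.span_le, Set.singleton_subset_iff]; exact h)
      rw [this]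
      exact hKI
    have hξt : ξ ∉ (t : Set R) := fun h => hξK (Ideal.subset_span h)
    obtain ⟨x0, hinj, hrange⟩ := gotoAux_finset_to_fin t
    set x : Fin (t.card + 1) → R := Fin.snoc x0 ξ with hxdef
    have hxl : x (Fin.last t.card) = ξ := by rw [hxdef]; simp
    have hxc : ∀ j, x (Fin.castSucc j) = x0 j := by intro j; rw [hxdef]; simp
    refine ⟨t.card + 1, x, sI, by omega, ?_, ?_, ?_⟩
    · rw [hxdef, gotoAux_range_snoc, Ideal.span_union, hrange, ← hnK]
    · intro i
      refine Fin.lastCases ?_ ?_ i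
      · intro hmem
        apply hξK
        have himg : x '' {j | j ≠ Fin.last t.card} ⊆ (t : Set R) := by
          rintro a ⟨j, hj, rfl⟩
          obtain ⟨j', rfl⟩ := Fin.exists_castSucc_eq.mpr hj
          rw [hxc]
          exact hrange ▸ Set.mem_range_self j'
        have := Ideal.span_mono himg hmem
        rwa [hxl] at this
      · intro i' hmem
        have hx0t : x0 i' ∈ (t : Set R) := hrange ▸ Set.mem_range_self i'
        refine hmin (x0 i') (Finset.mem_coe.mp hx0t) ?_
        have himg : x '' {j | j ≠ Fin.castSucc i'} ⊆
            ((t.erase (x0 i') : Finset R) : Set R) ∪ {ξ} := by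
          rintro a ⟨j, hj, rfl⟩
          rcases eq_or_ne j (Fin.last t.card) with rfl | hjne
          · right; rw [hxl]; rfl
          · obtain ⟨j', rfl⟩ := Fin.exists_castSucc_eq.mpr hjne
            left
            rw [hxc]
            refine Finset.mem_coe.mpr (Finset.mem_erase.mpr ⟨?_, ?_⟩)
            · intro h
              exact hj (by rw [hinj h])
            · have : x0 j' ∈ (t : Set R) := hrange ▸ Set.mem_range_self j'
              exact this
        have hmem' := Ideal.span_mono himg hmem
        rw [hxc] at hmem'
        rw [Ideal.span_union, sup_comm] at hmem'
        exact hmem'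
    · have hfun : (fun i : Fin (t.card + 1) =>
          if (i : ℕ) + 1 = t.card + 1 then x i ^ sI else x i) = Fin.snoc x0 (ξ ^ sI) := by
        funext i
        refine Fin.lastCases ?_ ?_ i
        · rw [if_pos (by simp), hxl]
          simp
        · intro j
          rw [if_neg (by simp; omega), hxc]
          simp
      rw [hfun, gotoAux_range_snoc, Ideal.span_union, hrange]
      exact hclimb


private lemma gotoAux_caseB {I : Ideal R} (hIn : I ≤ maximalIdeal R) (hirr : I.IsIrreducibleIdeal)
    (hT : ∃ T, (maximalIdeal R) ^ T ≤ I)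
    (hB : ∀ ξ ∈ maximalIdeal R,
      ¬ (maximalIdeal R ≤ I ⊔ (maximalIdeal R) ^ 2 ⊔ Ideal.span {ξ})) :
    (Submodule.colon I (maximalIdeal R)) ^ 2 = I * Submodule.colon I (maximalIdeal R) := by
  classical
  have hnI : ¬ maximalIdeal R ≤ I := by
    intro h
    exact hB 0 (zero_mem _) (le_trans h (le_sup_of_le_left le_sup_left))
  set sI := Nat.find hT with hsIdef
  have hsle : (maximalIdeal R) ^ sI ≤ I := Nat.find_spec hT
  have hminlt : ∀ t < sI, ¬ (maximalIdeal R) ^ t ≤ I := fun t ht => Nat.find_min hT ht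
  have hs0 : sI ≠ 0 := by
    intro h0
    rw [h0, pow_zero, Ideal.one_eq_top, top_le_iff] at hsle
    exact hirr.1 hsle
  have hs1 : sI ≠ 1 := by
    intro h1
    rw [h1, pow_one] at hsle
    exact hnI hsle
  -- every element of the colon is in the maximal ideal
  have hLn : ∀ w ∈ Submodule.colon I (maximalIdeal R), w ∈ maximalIdeal R := by
    intro w hw
    by_contra hwn
    obtain ⟨v, hv⟩ := gotoAux_unit_of_not_mem_max hwn
    apply hnI
    intro p hp
    have h1 : w * p ∈ I := by
      have := Submodule.mem_colon.mp hw p hp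
      rwa [smul_eq_mul] at this
    have : p = (↑v⁻¹ : R) * (w * p) := by rw [← mul_assoc, ← hv]; simp
    rw [this]
    exact Ideal.mul_mem_left I _ h1
  -- a socle element
  have hz0 : ∃ z0, z0 ∈ Submodule.colon I (maximalIdeal R) ∧ z0 ∉ I := by
    obtain ⟨z0, hz0mem, hz0I⟩ := SetLike.not_le_iff_exists.mp (hminlt (sI - 1) (by omega))
    refine ⟨z0, ?_, hz0I⟩
    rw [Submodule.mem_colon]
    intro p hp
    rw [smul_eq_mul]
    have h1 : z0 * p ∈ (maximalIdeal R) ^ (sI - 1) * maximalIdeal R :=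
      Ideal.mul_mem_mul hz0mem hp
    have h2 : (maximalIdeal R) ^ (sI - 1) * maximalIdeal R = (maximalIdeal R) ^ sI := by
      rw [← pow_succ]
      congr 1
      omega
    rw [h2] at h1
    exact hsle h1
  obtain ⟨z0, hz0L, hz0I⟩ := hz0
  -- a socle element inside n²
  have hzex : ∃ z, z ∈ Submodule.colon I (maximalIdeal R) ∧ z ∉ I ∧
      z ∈ (maximalIdeal R) ^ 2 := by
    by_cases hz02 : z0 ∈ I ⊔ (maximalIdeal R) ^ 2
    · obtain ⟨i, hi, ζ, hζ, hdec⟩ := Submodule.mem_sup.mp hz02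
      refine ⟨ζ, ?_, ?_, hζ⟩
      · have : ζ = z0 - i := by rw [← hdec]; ring
        rw [this]
        exact sub_mem hz0L (gotoAux_I_le_colon I _ hi)
      · intro hζI
        exact hz0I (by rw [← hdec]; exact add_mem hi hζI)
    · exfalso
      refine hB z0 (hLn z0 hz0L) ?_
      intro y hy
      by_cases hyI : y ∈ I
      · exact (le_sup_left.trans le_sup_left : I ≤ _) hyI
      · have hyq : z0 ∈ I ⊔ Ideal.span {y} := by
          refine gotoAux_socle_mem_of_gt hirr le_sup_left ?_ hz0L hz0I
          intro h
          exact hyI (by rw [← h] at hyI ⊢; exact (h ▸ Submodule.mem_sup_right (Ideal.subset_span rfl)))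
        obtain ⟨i, hi, d, hd, hdec⟩ := Submodule.mem_sup.mp hyq
        obtain ⟨r, hr⟩ := Ideal.mem_span_singleton'.mp hd
        by_cases hrn : r ∈ maximalIdeal R
        · exfalso
          apply hz02
          rw [← hr] at hdec
          refine Submodule.mem_sup.mpr ⟨i, hi, r * y, ?_, hdec⟩
          rw [pow_two]
          exact Ideal.mul_mem_mul hrn hy
        · obtain ⟨v, hv⟩ := gotoAux_unit_of_not_mem_max hrn
          have hyeq : y = (↑v⁻¹ : R) * (z0 - i) := by
            have : z0 - i = r * y := by rw [← hdec, ← hr]; ring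
            rw [this, ← hv, ← mul_assoc]
            simp
          rw [hyeq]
          refine Ideal.mul_mem_left _ _ (sub_mem ?_ ?_)
          · exact Submodule.mem_sup_right (Ideal.subset_span rfl)
          · exact (le_sup_left.trans le_sup_left : I ≤ _) hi
  obtain ⟨z1, hz1L, hz1I, hz12⟩ := hzex
  -- v := sI - 1 ≥ 2
  have hs2 : sI ≠ 2 := by
    intro h2
    exact hz1I (by rw [← h2] at hz12; exact hsle hz12)
  set v := sI - 1 with hvdef
  have hv2 : 2 ≤ v := by omega
  have hvlt : v < sI := by omega
  have hv1 : v - 1 + 1 = v := by omega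
  have hvsucc : v + 1 = sI := by omega
  -- deep element
  have hdeep : ∃ a ∈ (maximalIdeal R) ^ (v - 1), ∃ x ∈ maximalIdeal R, a * x ∉ I := by
    have hnv : ¬ (maximalIdeal R) ^ v ≤ I := hminlt v hvlt
    have : ¬ ((maximalIdeal R) ^ (v - 1) * maximalIdeal R ≤ I) := by
      rw [← pow_succ, hv1]
      exact hnv
    rw [Ideal.mul_le] at this
    push_neg at this
    exact this
  obtain ⟨a, han, x, hxn, hzI⟩ := hdeep
  set z := a * x with hz
  have hzn : z ∈ (maximalIdeal R) ^ v := by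
    rw [hz, ← hv1, pow_succ]
    exact Ideal.mul_mem_mul han hxn
  have hnvL : ∀ w ∈ (maximalIdeal R) ^ v, w ∈ Submodule.colon I (maximalIdeal R) := by
    intro w hw
    rw [Submodule.mem_colon]
    intro p hp
    rw [smul_eq_mul]
    refine hsle ?_
    rw [← hvsucc, pow_succ]
    exact Ideal.mul_mem_mul hw hp
  have hzL : z ∈ Submodule.colon I (maximalIdeal R) := hnvL z hzn
  have hLz : Submodule.colon I (maximalIdeal R) = I ⊔ Ideal.span {z} :=
    gotoAux_socle_dim_one hirr hzL hzI
  -- pick y independent from x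
  obtain ⟨y, hyn, hynot⟩ := SetLike.not_le_iff_exists.mp (hB x hxn)
  -- adjust y
  have hw1L : a * y ∈ Submodule.colon I (maximalIdeal R) := by
    refine hnvL _ ?_
    rw [← hv1, pow_succ]
    exact Ideal.mul_mem_mul han hyn
  have hw1mem : a * y ∈ I ⊔ Ideal.span {z} := hLz ▸ hw1L
  obtain ⟨i1, hi1, d1, hd1, hdec1⟩ := Submodule.mem_sup.mp hw1mem
  obtain ⟨θ, hθ⟩ := Ideal.mem_span_singleton'.mp hd1
  set y' := y - θ * x with hy'
  have hyt : a * y' ∈ I := by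
    have heq : a * y' = i1 := by
      linear_combination a * hy' - hdec1 - hθ + θ * hz
    rw [heq]
    exact hi1
  have hytnot : y' ∉ I ⊔ (maximalIdeal R) ^ 2 ⊔ Ideal.span {x} := by
    intro hmem
    apply hynot
    have : y = y' + θ * x := by rw [hy']; ring
    rw [this]
    exact add_mem hmem (le_sup_right (α := Ideal R)
      (Ideal.mul_mem_left _ θ (Ideal.subset_span rfl)))
  have hytI : y' ∉ I := fun h =>
    hytnot ((le_sup_left.trans le_sup_left : I ≤ _) h)
  -- the colon dichotomy
  set V : Ideal R := Submodule.colon (Submodule.colon I (maximalIdeal R)) (Ideal.span {x})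
    with hVdef
  by_cases hPI : I ⊔ Ideal.span {y'} * V = I
  · -- failure case: annihilator comparison + double annihilator
    exfalso
    have hyV : ∀ c ∈ V, y' * c ∈ I := by
      intro c hc
      have : y' * c ∈ Ideal.span {y'} * V :=
        Ideal.mul_mem_mul (Ideal.subset_span rfl) hc
      have h2 : y' * c ∈ I ⊔ Ideal.span {y'} * V := Submodule.mem_sup_right this
      rwa [hPI] at h2
    have hIxy : Submodule.colon I (Ideal.span {x}) ≤ Submodule.colon I (Ideal.span {y'}) := by
      intro c hc
      have hcx : c * x ∈ I := by
        have := Submodule.mem_colon.mp hc x (Ideal.subset_span rfl)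
        rwa [smul_eq_mul] at this
      have hcV : c ∈ V := by
        rw [hVdef, Submodule.mem_colon]
        intro p hp
        obtain ⟨r, hr⟩ := Ideal.mem_span_singleton'.mp hp
        rw [smul_eq_mul, ← hr, show c * (r * x) = r * (c * x) by ring]
        exact Ideal.mul_mem_left _ r (gotoAux_I_le_colon I _ hcx)
      rw [Submodule.mem_colon]
      intro p hp
      obtain ⟨r, hr⟩ := Ideal.mem_span_singleton'.mp hp
      rw [smul_eq_mul, ← hr, show c * (r * y') = r * (y' * c) by ring]
      exact Ideal.mul_mem_left _ r (hyV c hcV)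
    have hcc := gotoAux_colon_colon hT hirr (le_sup_left : I ≤ I ⊔ Ideal.span {x})
    have hcolJx : Submodule.colon I (I ⊔ Ideal.span {x} : Ideal R) = Submodule.colon I (Ideal.span {x}) :=
      gotoAux_colon_sup_left I _
    have hyJx : y' ∈ I ⊔ Ideal.span {x} := by
      rw [← hcc, Submodule.mem_colon]
      intro p hp
      rw [hcolJx] at hp
      have hp2 := hIxy hp
      have := Submodule.mem_colon.mp hp2 y' (Ideal.subset_span rfl)
      rwa [smul_eq_mul, mul_comm, ← smul_eq_mul] at this
    apply hytnot
    refine (sup_le (le_sup_of_le_left le_sup_left) le_sup_right :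
      I ⊔ Ideal.span {x} ≤ I ⊔ (maximalIdeal R) ^ 2 ⊔ Ideal.span {x}) hyJx
  · -- success case: z² ∈ I·L
    have hzP : z ∈ I ⊔ Ideal.span {y'} * V :=
      gotoAux_socle_mem_of_gt hirr le_sup_left hPI hzL hzI
    obtain ⟨i2, hi2, g, hg, hdec2⟩ := Submodule.mem_sup.mp hzP
    obtain ⟨c, hcV, hcg⟩ := Ideal.mem_span_singleton_mul.mp hg
    have hcxL : c * x ∈ Submodule.colon I (maximalIdeal R) := by
      have := Submodule.mem_colon.mp hcV x (Ideal.subset_span rfl)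
      rwa [smul_eq_mul] at this
    have hzz : z * z ∈ I * Submodule.colon I (maximalIdeal R) := by
      have h3 : z * z = i2 * z + (a * y') * (c * x) := by
        calc z * z = (i2 + y' * c) * z := by rw [show i2 + y' * c = z from by rw [← hdec2, hcg]]
          _ = i2 * z + y' * c * z := by ring
          _ = i2 * z + (a * y') * (c * x) := by rw [hz]; ring
      rw [h3]
      exact add_mem (Ideal.mul_mem_mul hi2 hzL) (Ideal.mul_mem_mul hyt hcxL)
    rw [pow_two]
    apply le_antisymm
    · conv_lhs => rw [hLz]
      rw [Ideal.mul_sup, Ideal.sup_mul, Ideal.sup_mul]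
      have hspanL : Ideal.span {z} ≤ Submodule.colon I (maximalIdeal R) := by
        rw [Ideal.span_le, Set.singleton_subset_iff]; exact hzL
      refine sup_le (sup_le ?_ ?_) (sup_le ?_ ?_)
      · exact Ideal.mul_mono le_rfl (gotoAux_I_le_colon I _)
      · rw [mul_comm]
        exact Ideal.mul_mono le_rfl hspanL
      · exact Ideal.mul_mono le_rfl hspanL
      · rw [Ideal.span_singleton_mul_span_singleton]
        rw [Ideal.span_le, Set.singleton_subset_iff]
        exact hzz
    · exact Ideal.mul_mono (gotoAux_I_le_colon I _) le_rfl

end GotoAux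

/-- **Theorem.** Let `(R, m)` be a Noetherian local ring and `I` an `m`-primary ideal with
`R ⧸ I` Gorenstein (equivalently, `I` irreducible). Then either `I = (x_1, …, x_{n-1},
x_n ^ s)` for some minimal generating set `x_1, …, x_n` of `m` and some `s ≥ 1`, or
`L² = I L` where `L = I : m`. -/
theorem goto_type_or_reduction_number_one
    {R : Type*} [CommRing R] [IsLocalRing R] [IsNoetherianRing R]
    (I : Ideal R) (hprim : I.radical = IsLocalRing.maximalIdeal R)
    (hgor : I.IsIrreducibleIdeal) :
    (∃ (n : ℕ) (x : Fin n → R) (s : ℕ), 1 ≤ s ∧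
        Ideal.span (Set.range x) = IsLocalRing.maximalIdeal R ∧
        (∀ i, x i ∉ Ideal.span (x '' {j | j ≠ i})) ∧
        I = Ideal.span (Set.range fun i : Fin n =>
          if (i : ℕ) + 1 = n then x i ^ s else x i)) ∨
      (Submodule.colon I (IsLocalRing.maximalIdeal R)) ^ 2 =
        I * Submodule.colon I (IsLocalRing.maximalIdeal R) := by
  classical
  have hIn : I ≤ maximalIdeal R := by
    rw [← hprim]; exact Ideal.le_radical
  have hT : ∃ T, (maximalIdeal R) ^ T ≤ I := by
    obtain ⟨T, hTle⟩ := Ideal.exists_radical_pow_le_of_fg I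
      (by rw [hprim]; exact IsNoetherian.noetherian _)
    exact ⟨T, by rw [← hprim]; exact hTle⟩
  by_cases hA : ∃ ξ ∈ maximalIdeal R,
      maximalIdeal R ≤ I ⊔ (maximalIdeal R) ^ 2 ⊔ Ideal.span {ξ}
  · exact Or.inl (gotoAux_caseA hIn hgor.1 hT hA)
  · push_neg at hA
    exact Or.inr (gotoAux_caseB hIn hgor hT hA)
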